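/- arXiv:2004.08127 — 2 statements merged into one kernel-verified Lean document; each statement's English description precedes it below -/
import Mathlib

section
/- For real numbers u_r, u_s and positive reals d_r, d_s, the function t ↦ max(|t - u_r| / d_r, |t - u_s| / d_s) attains its unique minimum at t* = (d_s · u_r + d_r · u_s) / (d_r + d_s), and the minimum value equals |u_r - u_s| / (d_r + d_s). -/
/-- Oberman's lemma: `t ↦ max (|t - uᵣ|/dᵣ) (|t - uₛ|/dₛ)` attains its unique
minimum at `t* = (dₛuᵣ + dᵣuₛ)/(dᵣ + dₛ)`, with value `|uᵣ - uₛ|/(dᵣ + dₛ)`. -/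
theorem stmt_7 (ur us dr ds : ℝ) (hdr : 0 < dr) (hds : 0 < ds) :
    max (|(ds * ur + dr * us) / (dr + ds) - ur| / dr)
        (|(ds * ur + dr * us) / (dr + ds) - us| / ds) = |ur - us| / (dr + ds) ∧
    ∀ t : ℝ,
      |ur - us| / (dr + ds) ≤ max (|t - ur| / dr) (|t - us| / ds) ∧
      (max (|t - ur| / dr) (|t - us| / ds) = |ur - us| / (dr + ds) →
        t = (ds * ur + dr * us) / (dr + ds)) := by
  have hSpos : (0:ℝ) < dr + ds := by linarith
  have hSne : dr + ds ≠ 0 := ne_of_gt hSpos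
  constructor
  · have h1 : (ds * ur + dr * us) / (dr + ds) - ur = dr * (us - ur) / (dr + ds) := by
      field_simp; ring
    have h2 : (ds * ur + dr * us) / (dr + ds) - us = ds * (ur - us) / (dr + ds) := by
      field_simp; ring
    rw [h1, h2]
    have e1 : |dr * (us - ur) / (dr + ds)| / dr = |ur - us| / (dr + ds) := by
      rw [abs_div, abs_mul, abs_of_pos hdr, abs_of_pos hSpos, abs_sub_comm]
      field_simp
    have e2 : |ds * (ur - us) / (dr + ds)| / ds = |ur - us| / (dr + ds) := by
      rw [abs_div, abs_mul, abs_of_pos hds, abs_of_pos hSpos]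
      field_simp
    rw [e1, e2, max_self]
  · intro t
    set c := max (|t - ur| / dr) (|t - us| / ds) with hc
    have hb1 : |t - ur| ≤ c * dr := by
      have := le_max_left (|t - ur| / dr) (|t - us| / ds)
      rw [div_le_iff₀ hdr] at this; exact this
    have hb2 : |t - us| ≤ c * ds := by
      have := le_max_right (|t - ur| / dr) (|t - us| / ds)
      rw [div_le_iff₀ hds] at this; exact this
    have tri : |ur - us| ≤ |t - ur| + |t - us| := by
      calc |ur - us| = |(ur - t) + (t - us)| := by ring_nf
        _ ≤ |ur - t| + |t - us| := abs_add_le _ _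
        _ = |t - ur| + |t - us| := by rw [abs_sub_comm ur t]
    constructor
    · rw [div_le_iff₀ hSpos]
      calc |ur - us| ≤ |t - ur| + |t - us| := tri
        _ ≤ c * dr + c * ds := add_le_add hb1 hb2
        _ = c * (dr + ds) := by ring
    · intro hmax
      set M := |ur - us| / (dr + ds) with hM
      have hMS : M * (dr + ds) = |ur - us| := by
        rw [hM, div_mul_cancel₀ _ hSne]
      rw [hmax] at hb1 hb2
      have heq1 : |t - ur| = M * dr := by
        nlinarith [tri]
      have heq2 : |t - us| = M * ds := by
        nlinarith [tri]
      have sq1 : (t - ur) ^ 2 = (M * dr) ^ 2 := by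
        rw [← sq_abs, heq1]
      have sq2 : (t - us) ^ 2 = (M * ds) ^ 2 := by
        rw [← sq_abs, heq2]
      have sqM : M ^ 2 * (dr + ds) ^ 2 = (ur - us) ^ 2 := by
        have : (M * (dr + ds)) ^ 2 = |ur - us| ^ 2 := by rw [hMS]
        rw [sq_abs] at this; nlinarith [this]
      rcases eq_or_ne ur us with h | h
      · subst h
        have : |t - ur| = 0 := by
          rw [heq1, hM]
          simp
        have ht : t = ur := by
          have := abs_eq_zero.mp this; linarith
        rw [ht]; field_simp; ring
      · rw [eq_div_iff hSne]
        have key : (us - ur) * (t * (dr + ds) - (ds * ur + dr * us)) = 0 := by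
          nlinarith [sq1, sq2, sqM, sq_nonneg (dr + ds)]
        have h' : us - ur ≠ 0 := sub_ne_zero.mpr (Ne.symm h)
        have := mul_eq_zero.mp key
        rcases this with h0 | h0
        · exact absurd h0 h'
        · linarith
end

section
/- Let Ω ⊆ ℝⁿ be open, bounded, and nonempty. The distance function d(x) = dist(x, ∂Ω) restricted to Ω (extended by 0 outside) is 1-Lipschitz, vanishes on ∂Ω, and satisfies ‖d‖_∞ = max_{x∈Ω̄} dist(x, ∂Ω). Consequently d realizes the infimum Λ₁ = inf ‖∇φ‖_∞/‖φ‖_∞ over nonzero Lipschitz functions vanishing on ∂Ω, and Λ₁ = 1 / max_{x∈Ω} dist(x, ∂Ω). -/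
open Metric

/-- The distance function `d(x) = dist(x, ∂Ω)` is 1-Lipschitz, vanishes on `∂Ω`,
attains its maximum on `Ω̄`, and realizes the infimum
`Λ₁ = inf Lip(φ)/‖φ‖_∞ = 1 / max_{x ∈ Ω} dist(x, ∂Ω)` over nonzero Lipschitz
functions vanishing on `∂Ω`. -/
theorem stmt_12 (n : ℕ) (Ω : Set (EuclideanSpace ℝ (Fin n)))
    (hopen : IsOpen Ω) (hbdd : Bornology.IsBounded Ω) (hne : Ω.Nonempty) :
    LipschitzWith 1 (fun x => infDist x (frontier Ω)) ∧
    (∀ x ∈ frontier Ω, infDist x (frontier Ω) = 0) ∧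
    (∃ x ∈ closure Ω, ∀ y ∈ closure Ω,
      infDist y (frontier Ω) ≤ infDist x (frontier Ω)) ∧
    IsGLB {r : ℝ | ∃ (L : ℝ) (φ : EuclideanSpace ℝ (Fin n) → ℝ), 0 ≤ L ∧
        (∀ x y, |φ x - φ y| ≤ L * dist x y) ∧
        (∀ x ∈ frontier Ω, φ x = 0) ∧
        (∃ x ∈ Ω, φ x ≠ 0) ∧
        r = L / ⨆ x : Ω, |φ x.1|}
      (1 / ⨆ x : Ω, infDist x.1 (frontier Ω)) := by
  obtain ⟨x₀, hx₀⟩ := hne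
  haveI : Nonempty Ω := ⟨⟨x₀, hx₀⟩⟩
  refine ⟨lipschitz_infDist_pt _, fun x hx => infDist_zero_of_mem hx, ?_, ?_⟩
  · have hcomp : IsCompact (closure Ω) := hbdd.isCompact_closure
    obtain ⟨x, hx, hmax⟩ := hcomp.exists_isMaxOn ⟨x₀, subset_closure hx₀⟩
      ((continuous_infDist_pt (frontier Ω)).continuousOn)
    exact ⟨x, hx, fun y hy => hmax hy⟩
  · by_cases hF : (frontier Ω).Nonempty
    · -- main case
      set F := frontier Ω with hFdef
      set d : EuclideanSpace ℝ (Fin n) → ℝ := fun x => infDist x F with hd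
      obtain ⟨y₀, hy₀⟩ := hF
      -- boundedness of d on Ω
      obtain ⟨R, hR⟩ := hbdd.subset_closedBall y₀
      have hdbdd : BddAbove (Set.range fun x : Ω => d x.1) := by
        refine ⟨R, ?_⟩
        rintro r ⟨⟨x, hx⟩, rfl⟩
        exact le_trans (infDist_le_dist_of_mem hy₀) (hR hx)
      set M : ℝ := ⨆ x : Ω, d x.1 with hM
      have hdpos : ∀ x ∈ Ω, 0 < d x := by
        intro x hx
        refine (IsClosed.notMem_iff_infDist_pos isClosed_frontier ⟨y₀, hy₀⟩).1 ?_
        intro hxF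
        rw [hopen.frontier_eq] at hxF
        exact hxF.2 hx
      have hMpos : 0 < M := lt_of_lt_of_le (hdpos x₀ hx₀) (le_ciSup hdbdd ⟨x₀, hx₀⟩)
      -- key: for Lipschitz φ vanishing on F, |φ x| ≤ L * d x
      have key : ∀ (L : ℝ) (φ : EuclideanSpace ℝ (Fin n) → ℝ), 0 ≤ L →
          (∀ x y, |φ x - φ y| ≤ L * dist x y) → (∀ x ∈ F, φ x = 0) →
          ∀ x, |φ x| ≤ L * d x := by
        intro L φ hL hLip hvan x
        rcases eq_or_lt_of_le hL with hL0 | hL0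
        · have := hLip x y₀
          rw [hvan y₀ hy₀, sub_zero] at this
          calc |φ x| ≤ L * dist x y₀ := this
            _ = 0 := by rw [← hL0]; ring
            _ ≤ L * d x := by rw [← hL0]; simp
        · rw [mul_comm, ← div_le_iff₀ hL0]
          by_contra h
          push_neg at h
          obtain ⟨y, hyF, hy⟩ := (infDist_lt_iff ⟨y₀, hy₀⟩).1 h
          have := hLip x y
          rw [hvan y hyF, sub_zero] at this
          have : |φ x| < |φ x| := lt_of_le_of_lt this (by
            calc L * dist x y < L * (|φ x| / L) := by
                  exact (mul_lt_mul_iff_right₀ hL0).2 hy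
              _ = |φ x| := by field_simp)
          exact absurd this (lt_irrefl _)
      refine IsLeast.isGLB ⟨?_, ?_⟩
      · -- membership: d itself
        refine ⟨1, d, zero_le_one, ?_, ?_, ⟨x₀, hx₀, (hdpos x₀ hx₀).ne'⟩, ?_⟩
        · intro x y
          have := (lipschitz_infDist_pt F).dist_le_mul x y
          rwa [Real.dist_eq, NNReal.coe_one] at this
        · intro x hx; exact infDist_zero_of_mem hx
        · have : (⨆ x : Ω, |d x.1|) = M := by
            exact iSup_congr fun x => abs_of_nonneg infDist_nonneg
          rw [this]
      · -- lower bound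
        rintro r ⟨L, φ, hL, hLip, hvan, ⟨z, hz, hzne⟩, rfl⟩
        have hLpos : 0 < L := by
          rcases eq_or_lt_of_le hL with hL0 | hL0
          · exfalso
            have := key L φ hL hLip hvan z
            rw [← hL0, zero_mul] at this
            exact hzne (abs_eq_zero.1 (le_antisymm this (abs_nonneg _)))
          · exact hL0
        have hbddφ : BddAbove (Set.range fun x : Ω => |φ x.1|) := by
          refine ⟨L * R, ?_⟩
          rintro r ⟨⟨x, hx⟩, rfl⟩
          exact le_trans (key L φ hL hLip hvan x)
            (mul_le_mul_of_nonneg_left (le_trans (infDist_le_dist_of_mem hy₀) (hR hx)) hL)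
        set S : ℝ := ⨆ x : Ω, |φ x.1| with hS
        have hSpos : 0 < S := by
          have := le_ciSup hbddφ (⟨z, hz⟩ : Ω)
          exact lt_of_lt_of_le (abs_pos.2 hzne) this
        have hSle : S ≤ L * M := by
          refine ciSup_le fun x => ?_
          exact le_trans (key L φ hL hLip hvan x.1)
            (mul_le_mul_of_nonneg_left (le_ciSup hdbdd x) hL)
        rw [div_le_div_iff₀ hMpos hSpos]
        linarith
    · -- frontier empty
      rw [Set.not_nonempty_iff_eq_empty] at hF
      have h0 : (⨆ x : Ω, infDist x.1 (frontier Ω)) = 0 := by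
        rw [hF]; simp
      rw [h0, div_zero]
      refine IsLeast.isGLB ⟨?_, ?_⟩
      · refine ⟨0, fun _ => 1, le_refl 0, by simp, by rw [hF]; simp, ⟨x₀, hx₀, one_ne_zero⟩, ?_⟩
        rw [zero_div]
      · rintro r ⟨L, φ, hL, _, _, _, rfl⟩
        exact div_nonneg hL (Real.iSup_nonneg fun x => abs_nonneg _)
end
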